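/- Let G be an almost peripheral graph of order n ≥ 7 with maximum degree Δ. Then either Δ = n − 1 or 3 ≤ Δ ≤ n − 4; in particular Δ ≠ n − 2 and Δ ≠ n − 3. -/

import Mathlib

open SimpleGraph

/-- The eccentricity of a vertex `v`: the maximum distance from `v` to any vertex. -/
noncomputable def graphEcc {V : Type*} [Fintype V] (G : SimpleGraph V) (v : V) : ℕ :=
  Finset.univ.sup fun u => G.dist v u

/-- The radius of a graph: the minimum eccentricity over all vertices. -/
noncomputable def graphRadius {V : Type*} [Fintype V] (G : SimpleGraph V) : ℕ :=
  sInf (Set.range (graphEcc G))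

/-- The diameter of a graph: the maximum eccentricity over all vertices. -/
noncomputable def graphDiam {V : Type*} [Fintype V] (G : SimpleGraph V) : ℕ :=
  Finset.univ.sup (graphEcc G)

/-- A connected graph of order `n` is almost self-centered if it has exactly `n - 2`
central vertices (vertices whose eccentricity equals the radius). -/
def IsAlmostSelfCentered {V : Type*} [Fintype V] (G : SimpleGraph V) : Prop :=
  G.Connected ∧ Nat.card {v : V | graphEcc G v = graphRadius G} = Fintype.card V - 2

/-- A connected graph of order `n` is almost peripheral if it has exactly `n - 1`
peripheral vertices (vertices whose eccentricity equals the diameter). -/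
def IsAlmostPeripheral {V : Type*} [Fintype V] (G : SimpleGraph V) : Prop :=
  G.Connected ∧ Nat.card {v : V | graphEcc G v = graphDiam G} = Fintype.card V - 1

/-- The maximum degree of a graph. -/
noncomputable def graphMaxDeg {V : Type*} [Fintype V] (G : SimpleGraph V) : ℕ :=
  Finset.univ.sup fun v => (G.neighborSet v).ncard

section APHelpers

variable {V : Type*} [Fintype V] {G : SimpleGraph V} {u : V}

lemma apDistLe (v w : V) : G.dist v w ≤ graphEcc G v :=
  Finset.le_sup (Finset.mem_univ w)

lemma apEccExists [Nonempty V] (v : V) : ∃ w, G.dist v w = graphEcc G v := by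
  obtain ⟨w, -, hw⟩ := Finset.exists_mem_eq_sup Finset.univ Finset.univ_nonempty
    (fun u => G.dist v u)
  exact ⟨w, hw.symm⟩

lemma apEccLeDiam (v : V) : graphEcc G v ≤ graphDiam G :=
  Finset.le_sup (Finset.mem_univ v)

lemma apDegLe (v : V) : (G.neighborSet v).ncard ≤ graphMaxDeg G :=
  Finset.le_sup (f := fun v => (G.neighborSet v).ncard) (Finset.mem_univ v)

lemma apMaxDegExists [Nonempty V] (G : SimpleGraph V) :
    ∃ v, (G.neighborSet v).ncard = graphMaxDeg G := by
  obtain ⟨v, -, hv⟩ := Finset.exists_mem_eq_sup Finset.univ Finset.univ_nonempty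
    (fun v => (G.neighborSet v).ncard)
  exact ⟨v, hv.symm⟩

lemma apAdjDist {a b : V} (h : G.Adj a b) : G.dist a b = 1 :=
  SimpleGraph.dist_eq_one_iff_adj.mpr h

lemma apWalkSplit (hc : G.Connected) {a b : V} (p : G.Walk a b) :
    ∀ k : ℕ, k ≤ p.length → ∃ c, G.dist a c ≤ k ∧ G.dist c b ≤ p.length - k := by
  induction p with
  | nil =>
    intro k hk
    rename_i x
    exact ⟨x, by simp [SimpleGraph.dist_self], by simp [SimpleGraph.dist_self]⟩
  | @cons a a₂ b h q ih =>
    intro k hk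
    match k with
    | 0 => exact ⟨a, by simp, SimpleGraph.dist_le _⟩
    | Nat.succ k =>
      obtain ⟨c, h1, h2⟩ := ih k (by simpa [Nat.succ_le_succ_iff] using hk)
      refine ⟨c, ?_, by simpa using h2⟩
      calc G.dist a c ≤ G.dist a a₂ + G.dist a₂ c := hc.dist_triangle
        _ ≤ 1 + k := by
            have := apAdjDist h
            omega
        _ = k + 1 := by omega

lemma apSplit (hc : G.Connected) {a b : V} {k : ℕ} (hk : k ≤ G.dist a b) :
    ∃ c, G.dist a c = k ∧ G.dist c b = G.dist a b - k := by
  obtain ⟨p, hp⟩ := (hc a b).exists_walk_length_eq_dist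
  obtain ⟨c, h1, h2⟩ := apWalkSplit hc p k (by omega)
  have h3 := hc.dist_triangle (u := a) (v := c) (w := b)
  exact ⟨c, by omega, by omega⟩

lemma apBack (hc : G.Connected) {a b : V} {k : ℕ} (h : G.dist a b = k + 1) :
    ∃ c, G.dist a c = k ∧ G.Adj c b := by
  obtain ⟨c, h1, h2⟩ := apSplit hc (show k ≤ G.dist a b by omega)
  refine ⟨c, h1, SimpleGraph.dist_eq_one_iff_adj.mp (by omega)⟩

lemma apFront (hc : G.Connected) {a b : V} (h : G.dist a b ≠ 0) :
    ∃ c, G.Adj a c ∧ G.dist c b = G.dist a b - 1 := by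
  obtain ⟨c, h1, h2⟩ := apSplit hc (show 1 ≤ G.dist a b by omega)
  exact ⟨c, SimpleGraph.dist_eq_one_iff_adj.mp h1, h2⟩

lemma apNeighbor (hc : G.Connected) (h2 : 2 ≤ Fintype.card V) (v : V) :
    ∃ x, G.Adj v x := by
  obtain ⟨w, hw⟩ := Fintype.exists_ne_of_one_lt_card (by omega) v
  have h0 : G.dist v w ≠ 0 := fun h => hw (hc.dist_eq_zero_iff.mp h).symm
  obtain ⟨c, hcadj, -⟩ := apFront hc h0
  exact ⟨c, hcadj⟩

lemma apUnique (hAP : IsAlmostPeripheral G) (h1 : 1 ≤ Fintype.card V) :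
    ∃ u : V, graphEcc G u ≠ graphDiam G ∧
      ∀ v, v ≠ u → graphEcc G v = graphDiam G := by
  have hs : ({v : V | graphEcc G v = graphDiam G} : Set V).ncard
      = Fintype.card V - 1 := by
    rw [← Nat.card_coe_set_eq]
    exact hAP.2
  have hcompl := Set.ncard_add_ncard_compl
    ({v : V | graphEcc G v = graphDiam G} : Set V) (Set.toFinite _)
  rw [Nat.card_eq_fintype_card, hs] at hcompl
  have hle : ({v : V | graphEcc G v = graphDiam G} : Set V).ncard ≤ Fintype.card V := by
    rw [hs]; omega
  have h1' : ({v : V | graphEcc G v = graphDiam G} : Set V)ᶜ.ncard = 1 := by omega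
  obtain ⟨u, hu⟩ := Set.ncard_eq_one.mp h1'
  refine ⟨u, ?_, ?_⟩
  · have : u ∈ ({v : V | graphEcc G v = graphDiam G} : Set V)ᶜ := by
      rw [hu]; exact rfl
    simpa using this
  · intro v hv
    by_contra h
    have : v ∈ ({v : V | graphEcc G v = graphDiam G} : Set V)ᶜ := by simpa using h
    rw [hu] at this
    exact hv this

lemma apDiam2 (hc : G.Connected) (h3 : 3 ≤ Fintype.card V)
    (hu_ne : graphEcc G u ≠ graphDiam G) : 2 ≤ graphDiam G := by
  by_contra h
  push_neg at h
  have h1 : graphEcc G u = 0 := by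
    have := apEccLeDiam (G := G) u
    omega
  have hall : ∀ w : V, w = u := by
    intro w
    have := apDistLe (G := G) u w
    rw [h1] at this
    exact (hc.dist_eq_zero_iff.mp (by omega)).symm
  have : Fintype.card V ≤ 1 :=
    Fintype.card_le_one_iff.mpr fun a b => (hall a).trans (hall b).symm
  omega

lemma apEccU (hc : G.Connected) (h2 : 2 ≤ Fintype.card V)
    (hu_ne : graphEcc G u ≠ graphDiam G)
    (hu_all : ∀ v, v ≠ u → graphEcc G v = graphDiam G) :
    graphEcc G u + 1 = graphDiam G := by
  have : Nonempty V := Fintype.card_pos_iff.mp (by omega)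
  obtain ⟨x, hx⟩ := apNeighbor hc h2 u
  have hxu : x ≠ u := hx.ne'
  have hex : graphEcc G x = graphDiam G := hu_all x hxu
  obtain ⟨w, hw⟩ := apEccExists (G := G) x
  have h1 : G.dist x w ≤ G.dist x u + G.dist u w := hc.dist_triangle
  have h2' : G.dist x u = 1 := apAdjDist hx.symm
  have h3 : G.dist u w ≤ graphEcc G u := apDistLe u w
  have h4 : graphEcc G u ≤ graphDiam G := apEccLeDiam u
  rw [hex] at hw
  omega

lemma apEccOne (hc : G.Connected) (h2 : 2 ≤ Fintype.card V)
    (h : graphEcc G u ≤ 1) : Fintype.card V - 1 ≤ graphMaxDeg G := by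
  classical
  have hsub : Finset.univ.erase u ⊆ (G.neighborSet u).toFinset := by
    intro w hw
    have hwu : w ≠ u := Finset.ne_of_mem_erase hw
    have h0 : G.dist u w ≠ 0 := fun hh => hwu (hc.dist_eq_zero_iff.mp hh).symm
    have h1 : G.dist u w ≤ 1 := (apDistLe u w).trans h
    have : G.Adj u w := SimpleGraph.dist_eq_one_iff_adj.mp (by omega)
    simpa using this
  have hcard := Finset.card_le_card hsub
  rw [Finset.card_erase_of_mem (Finset.mem_univ u), Finset.card_univ] at hcard
  rw [← Set.ncard_eq_toFinset_card'] at hcard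
  exact hcard.trans (apDegLe u)

lemma apMaxDegLe : graphMaxDeg G ≤ Fintype.card V - 1 := by
  classical
  apply Finset.sup_le
  intro v _
  rw [Set.ncard_eq_toFinset_card']
  have hsub : (G.neighborSet v).toFinset ⊆ Finset.univ.erase v := by
    intro w hw
    rw [Set.mem_toFinset] at hw
    exact Finset.mem_erase.mpr ⟨hw.ne', Finset.mem_univ w⟩
  have := Finset.card_le_card hsub
  rwa [Finset.card_erase_of_mem (Finset.mem_univ v), Finset.card_univ] at this

end APHelpers

section MainCases

variable {V : Type*} [Fintype V] {G : SimpleGraph V} {u : V}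

/-- Δ = n - 2 is impossible. -/
lemma apNotN2 (hc : G.Connected) (h7 : 7 ≤ Fintype.card V)
    (hu_ne : graphEcc G u ≠ graphDiam G)
    (hu_all : ∀ v, v ≠ u → graphEcc G v = graphDiam G)
    (hΔ : graphMaxDeg G = Fintype.card V - 2) : False := by
  classical
  have : Nonempty V := Fintype.card_pos_iff.mp (by omega)
  obtain ⟨v, hv⟩ := apMaxDegExists G
  rw [hΔ] at hv
  have hF : (G.neighborSet v).toFinset.card = Fintype.card V - 2 := by
    rw [← Set.ncard_eq_toFinset_card']; exact hv
  have hvF : v ∉ (G.neighborSet v).toFinset := by simp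
  have hWcard : (Finset.univ \ insert v (G.neighborSet v).toFinset).card = 1 := by
    rw [Finset.card_sdiff_of_subset (Finset.subset_univ _), Finset.card_insert_of_notMem hvF,
      Finset.card_univ, hF]
    omega
  obtain ⟨w, hw⟩ := Finset.card_eq_one.mp hWcard
  have hwmem : w ∈ Finset.univ \ insert v (G.neighborSet v).toFinset := by
    rw [hw]; exact Finset.mem_singleton_self w
  rw [Finset.mem_sdiff, Finset.mem_insert, Set.mem_toFinset] at hwmem
  push_neg at hwmem
  obtain ⟨-, hwv, hwnadj⟩ := hwmem
  have hadj : ∀ x, x ≠ v → x ≠ w → G.Adj v x := by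
    intro x hxv hxw
    by_contra hna
    have : x ∈ Finset.univ \ insert v (G.neighborSet v).toFinset := by
      rw [Finset.mem_sdiff, Finset.mem_insert, Set.mem_toFinset]
      exact ⟨Finset.mem_univ x, fun h => h.elim hxv hna⟩
    rw [hw, Finset.mem_singleton] at this
    exact hxw this
  obtain ⟨t, ht⟩ := apNeighbor hc (by omega) w
  have htv : t ≠ v := by
    intro h
    exact hwnadj (h ▸ ht).symm
  have hadjvt : G.Adj v t := hadj t htv ht.ne'
  have hdvw : G.dist v w = 2 := by
    have hle : G.dist v w ≤ 2 := by
      have h1 := hc.dist_triangle (u := v) (v := t) (w := w)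
      have h2 := apAdjDist hadjvt
      have h3 := apAdjDist ht.symm
      omega
    have h0 : G.dist v w ≠ 0 := fun h => hwv ((hc.dist_eq_zero_iff.mp h).symm)
    have h1 : G.dist v w ≠ 1 := fun h =>
      hwnadj (SimpleGraph.dist_eq_one_iff_adj.mp h)
    omega
  have heccv : graphEcc G v = 2 := by
    apply le_antisymm
    · apply Finset.sup_le
      intro x _
      rcases eq_or_ne x v with rfl | hxv
      · simp [SimpleGraph.dist_self]
      rcases eq_or_ne x w with rfl | hxw
      · omega
      · have := apAdjDist (hadj x hxv hxw)
        omega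
    · exact hdvw ▸ apDistLe v w
  have hd2 : 2 ≤ graphDiam G := apDiam2 hc (by omega) hu_ne
  have hue : graphEcc G u + 1 = graphDiam G := apEccU hc (by omega) hu_ne hu_all
  rcases eq_or_lt_of_le hd2 with hd | hd
  · -- diam = 2, so ecc u = 1, so deg u = n - 1 > n - 2
    have h1 : graphEcc G u ≤ 1 := by omega
    have := apEccOne hc (by omega) h1
    omega
  · -- diam ≥ 3
    have hvu : v = u := by
      by_contra h
      have hvd := hu_all v h
      omega
    have heccu : graphEcc G u = 2 := hvu ▸ heccv
    have hd3 : graphDiam G = 3 := by omega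
    have htu : t ≠ u := fun hh => hadjvt.ne' (hh.trans hvu.symm)
    have hecct : graphEcc G t = 3 := by rw [hu_all t htu, hd3]
    obtain ⟨s, hs⟩ := apEccExists (G := G) t
    rw [hecct] at hs
    have h1 : G.dist t s ≤ G.dist t v + G.dist v s := hc.dist_triangle
    have h2 : G.dist t v = 1 := apAdjDist hadjvt.symm
    have h3 : G.dist v s ≤ 2 := heccv ▸ apDistLe v s
    have hvs : G.dist v s = 2 := by omega
    have hsv : s ≠ v := by
      intro h; subst h
      rw [SimpleGraph.dist_self] at hvs; omega
    have hsnadj : ¬ G.Adj v s := fun h => by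
      rw [apAdjDist h] at hvs; omega
    have hsw : s = w := by
      by_contra h
      exact hsnadj (hadj s hsv h)
    rw [hsw] at hs
    have h4 : G.dist t w = 1 := apAdjDist ht.symm
    omega

/-- Δ = n - 3 is impossible. -/
lemma apNotN3 (hc : G.Connected) (h7 : 7 ≤ Fintype.card V)
    (hu_ne : graphEcc G u ≠ graphDiam G)
    (hu_all : ∀ v, v ≠ u → graphEcc G v = graphDiam G)
    (hΔ : graphMaxDeg G = Fintype.card V - 3) : False := by
  classical
  have : Nonempty V := Fintype.card_pos_iff.mp (by omega)
  obtain ⟨v, hv⟩ := apMaxDegExists G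
  rw [hΔ] at hv
  have hF : (G.neighborSet v).toFinset.card = Fintype.card V - 3 := by
    rw [← Set.ncard_eq_toFinset_card']; exact hv
  have hvF : v ∉ (G.neighborSet v).toFinset := by simp
  have hWcard : (Finset.univ \ insert v (G.neighborSet v).toFinset).card = 2 := by
    rw [Finset.card_sdiff_of_subset (Finset.subset_univ _), Finset.card_insert_of_notMem hvF,
      Finset.card_univ, hF]
    omega
  obtain ⟨w₁, w₂, hw12, hW⟩ := Finset.card_eq_two.mp hWcard
  have hprop : ∀ x : V, (x = w₁ ∨ x = w₂) ↔ (x ≠ v ∧ ¬ G.Adj v x) := by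
    intro x
    constructor
    · intro h
      have : x ∈ Finset.univ \ insert v (G.neighborSet v).toFinset := by
        rw [hW]; simpa using h
      rw [Finset.mem_sdiff, Finset.mem_insert, Set.mem_toFinset,
        SimpleGraph.mem_neighborSet] at this
      push_neg at this
      exact ⟨this.2.1, this.2.2⟩
    · intro ⟨h1, h2⟩
      have : x ∈ Finset.univ \ insert v (G.neighborSet v).toFinset := by
        rw [Finset.mem_sdiff, Finset.mem_insert, Set.mem_toFinset,
          SimpleGraph.mem_neighborSet]
        exact ⟨Finset.mem_univ x, fun h => h.elim h1 h2⟩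
      rw [hW] at this
      simpa using this
  have hw1v : w₁ ≠ v := ((hprop w₁).mp (Or.inl rfl)).1
  have hw1na : ¬ G.Adj v w₁ := ((hprop w₁).mp (Or.inl rfl)).2
  have hw2v : w₂ ≠ v := ((hprop w₂).mp (Or.inr rfl)).1
  have hw2na : ¬ G.Adj v w₂ := ((hprop w₂).mp (Or.inr rfl)).2
  have hclass : ∀ x : V, x = v ∨ x = w₁ ∨ x = w₂ ∨ G.Adj v x := by
    intro x
    by_cases h1 : x = v
    · exact Or.inl h1
    by_cases h2 : G.Adj v x
    · exact Or.inr (Or.inr (Or.inr h2))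
    · rcases (hprop x).mpr ⟨h1, h2⟩ with h | h
      · exact Or.inr (Or.inl h)
      · exact Or.inr (Or.inr (Or.inl h))
  have hdge2 : ∀ a : V, a ≠ v → ¬ G.Adj v a → 2 ≤ G.dist v a := by
    intro a h1 h2
    have h0 : G.dist v a ≠ 0 := fun h => h1 (hc.dist_eq_zero_iff.mp h).symm
    have h1' : G.dist v a ≠ 1 := fun h => h2 (SimpleGraph.dist_eq_one_iff_adj.mp h)
    omega
  have key3 : ∀ a b : V, ¬ G.Adj v a → ¬ G.Adj v b →
      (∀ x : V, x = v ∨ x = a ∨ x = b ∨ G.Adj v x) → G.dist v a ≤ 3 := by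
    intro a b hna hnb hcl
    by_contra h
    push_neg at h
    obtain ⟨c, hc1, hc2⟩ := apBack hc (show G.dist v a = (G.dist v a - 1) + 1 by omega)
    have hcv : c ≠ v := by
      intro hh; subst hh; rw [SimpleGraph.dist_self] at hc1; omega
    have hcna : ¬ G.Adj v c := fun hh => by rw [apAdjDist hh] at hc1; omega
    have hcb : c = b := by
      rcases hcl c with hh | hh | hh | hh
      · exact absurd hh hcv
      · subst hh; exact (G.irrefl hc2).elim
      · exact hh
      · exact absurd hh hcna
    subst hcb
    obtain ⟨c', hc1', hc2'⟩ := apBack hc (show G.dist v c = (G.dist v c - 1) + 1 by omega)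
    have hcv' : c' ≠ v := by
      intro hh; subst hh; rw [SimpleGraph.dist_self] at hc1'; omega
    have hcna' : ¬ G.Adj v c' := fun hh => by rw [apAdjDist hh] at hc1'; omega
    rcases hcl c' with hh | hh | hh | hh
    · exact hcv' hh
    · subst hh; omega
    · subst hh; exact G.irrefl (hc2'.symm)
    · exact hcna' hh
  have hclass' : ∀ x : V, x = v ∨ x = w₂ ∨ x = w₁ ∨ G.Adj v x := by
    intro x; rcases hclass x with h | h | h | h <;> tauto
  have hd3w1 : G.dist v w₁ ≤ 3 := key3 w₁ w₂ hw1na hw2na hclass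
  have hd3w2 : G.dist v w₂ ≤ 3 := key3 w₂ w₁ hw2na hw1na hclass'
  have heccle : graphEcc G v ≤ 3 := by
    apply Finset.sup_le
    intro x _
    rcases hclass x with rfl | rfl | rfl | h
    · simp [SimpleGraph.dist_self]
    · exact hd3w1
    · exact hd3w2
    · rw [apAdjDist h]; omega
  have heccge : 2 ≤ graphEcc G v := (hdge2 w₁ hw1v hw1na).trans (apDistLe v w₁)
  have hd2 : 2 ≤ graphDiam G := apDiam2 hc (by omega) hu_ne
  have hue : graphEcc G u + 1 = graphDiam G := apEccU hc (by omega) hu_ne hu_all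
  rcases eq_or_lt_of_le hd2 with hd | hd
  · -- diam = 2
    have := apEccOne hc (by omega) (show graphEcc G u ≤ 1 by omega)
    omega
  rcases lt_or_ge (graphDiam G) 4 with hd4 | hd4
  · -- diam = 3
    have hd3 : graphDiam G = 3 := by omega
    rcases eq_or_ne (graphEcc G v) 3 with he3 | hne3
    · -- ecc v = 3
      obtain ⟨s, hs⟩ := apEccExists (G := G) v
      rw [he3] at hs
      have hsv : s ≠ v := by
        intro hh; subst hh; rw [SimpleGraph.dist_self] at hs; omega
      have hsna : ¬ G.Adj v s := fun hh => by rw [apAdjDist hh] at hs; omega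
      have claim33 : ∀ a b : V, ¬ G.Adj v a → ¬ G.Adj v b →
          (∀ x : V, x = v ∨ x = a ∨ x = b ∨ G.Adj v x) → G.dist v a = 3 → False := by
        intro a b hna hnb hcl hda
        obtain ⟨c, hc1, hc2⟩ := apBack hc (show G.dist v a = 2 + 1 from hda)
        have hcv : c ≠ v := by
          intro hh; subst hh; rw [SimpleGraph.dist_self] at hc1; omega
        have hcna : ¬ G.Adj v c := fun hh => by rw [apAdjDist hh] at hc1; omega
        have hcb : c = b := by
          rcases hcl c with hh | hh | hh | hh
          · exact absurd hh hcv
          · subst hh; exact (G.irrefl hc2).elim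
          · exact hh
          · exact absurd hh hcna
        rw [hcb] at hc1 hc2
        -- b ~ a, dist v b = 2
        have hba : G.Adj b a := hc2
        have hpend : ∀ z : V, G.Adj a z → z = b := by
          intro z hz
          have hzv : z ≠ v := by
            intro hh; subst hh; exact hna hz.symm
          have hzna : ¬ G.Adj v z := by
            intro hh
            have h1 := hc.dist_triangle (u := v) (v := z) (w := a)
            rw [apAdjDist hh, apAdjDist hz.symm] at h1
            omega
          rcases hcl z with hh | hh | hh | hh
          · exact absurd hh hzv
          · subst hh; exact (G.irrefl hz).elim
          · exact hh
          · exact absurd hh hzna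
        have hpd : ∀ x : V, x ≠ a → G.dist a x = 1 + G.dist b x := by
          intro x hx
          have h0 : G.dist a x ≠ 0 := fun hh => hx (hc.dist_eq_zero_iff.mp hh).symm
          obtain ⟨c₁, hc₁, hc₁'⟩ := apFront hc h0
          have hcb1 : c₁ = b := hpend c₁ hc₁
          rw [hcb1] at hc₁'
          have htr := hc.dist_triangle (u := a) (v := b) (w := x)
          rw [apAdjDist hba.symm] at htr
          omega
        have heccb : graphEcc G b ≤ 2 := by
          apply Finset.sup_le
          intro x _
          rcases eq_or_ne x a with rfl | hxa
          · rw [SimpleGraph.dist_comm, apAdjDist hba.symm]; omega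
          · have h1 := hpd x (Ne.symm (fun hh => hxa hh.symm))
            have h2 : G.dist a x ≤ 3 := by
              have := apDistLe (G := G) a x
              have := apEccLeDiam (G := G) a
              omega
            omega
        have hbu : b = u := by
          by_contra hh
          have := hu_all b hh
          omega
        obtain ⟨t, ht1, ht2⟩ := apFront hc (show G.dist v b ≠ 0 by omega)
        have htb : G.Adj t b := SimpleGraph.dist_eq_one_iff_adj.mp (by omega)
        have htu : t ≠ u := fun hh => G.irrefl ((hh.trans hbu.symm) ▸ htb)
        have hecct : graphEcc G t = 3 := by rw [hu_all t htu, hd3]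
        obtain ⟨s', hs'⟩ := apEccExists (G := G) t
        rw [hecct] at hs'
        have h1 := hc.dist_triangle (u := t) (v := v) (w := s')
        rw [apAdjDist ht1.symm] at h1
        have hvs' : 2 ≤ G.dist v s' := by omega
        have hs'v : s' ≠ v := by
          intro hh; subst hh; rw [SimpleGraph.dist_self] at hvs'; omega
        have hs'na : ¬ G.Adj v s' := fun hh => by rw [apAdjDist hh] at hvs'; omega
        have hta : t ≠ a := fun hh => hna (hh ▸ ht1)
        have hdta : G.dist t s' ≤ 2 := by
          rcases hcl s' with hh | hh | hh | hh
          · exact absurd hh hs'v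
          · have hbt : G.dist b t = 1 := by
              rw [SimpleGraph.dist_comm]; exact apAdjDist htb
            have h2' := hpd t hta
            rw [hh, SimpleGraph.dist_comm]
            omega
          · rw [hh, apAdjDist htb]; omega
          · exact absurd hh hs'na
        omega
      rcases hclass s with hh | hh | hh | hh
      · exact absurd hh hsv
      · exact claim33 w₁ w₂ hw1na hw2na hclass (hh ▸ hs)
      · exact claim33 w₂ w₁ hw2na hw1na hclass' (hh ▸ hs)
      · exact absurd hh hsna
    · -- ecc v = 2
      have he2 : graphEcc G v = 2 := by omega
      have hvu : v = u := by
        by_contra hh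
        have := hu_all v hh
        omega
      have hdv1 : G.dist v w₁ = 2 :=
        le_antisymm (he2 ▸ apDistLe v w₁) (hdge2 w₁ hw1v hw1na)
      have hdv2 : G.dist v w₂ = 2 :=
        le_antisymm (he2 ▸ apDistLe v w₂) (hdge2 w₂ hw2v hw2na)
      have hS : ∀ x : V, G.Adj v x → G.dist x w₁ = 3 ∨ G.dist x w₂ = 3 := by
        intro x hx
        have hxu : x ≠ u := fun hh => G.irrefl ((hvu.trans hh.symm) ▸ hx)
        have heccx : graphEcc G x = 3 := by rw [hu_all x hxu, hd3]
        obtain ⟨s, hs⟩ := apEccExists (G := G) x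
        rw [heccx] at hs
        have h1 := hc.dist_triangle (u := x) (v := v) (w := s)
        rw [apAdjDist hx.symm] at h1
        have hvs : 2 ≤ G.dist v s := by omega
        have hsv : s ≠ v := by
          intro hh; subst hh; rw [SimpleGraph.dist_self] at hvs; omega
        have hsna : ¬ G.Adj v s := fun hh => by rw [apAdjDist hh] at hvs; omega
        rcases hclass s with hh | hh | hh | hh
        · exact absurd hh hsv
        · exact Or.inl (hh ▸ hs)
        · exact Or.inr (hh ▸ hs)
        · exact absurd hh hsna
      obtain ⟨t₁, ht₁, ht₁'⟩ := apFront hc (show G.dist v w₁ ≠ 0 by omega)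
      have htw₁ : G.Adj t₁ w₁ := SimpleGraph.dist_eq_one_iff_adj.mp (by omega)
      have ht₁w₂ : G.dist t₁ w₂ = 3 := by
        rcases hS t₁ ht₁ with hh | hh
        · rw [apAdjDist htw₁] at hh; omega
        · exact hh
      have hm2 : 2 ≤ G.dist w₁ w₂ := by
        have h1 := hc.dist_triangle (u := t₁) (v := w₁) (w := w₂)
        rw [apAdjDist htw₁] at h1
        omega
      obtain ⟨c, hc1, hc2⟩ := apFront hc (show G.dist w₁ w₂ ≠ 0 by omega)
      have hm3 : G.dist w₁ w₂ ≤ 3 := by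
        have := apDistLe (G := G) w₁ w₂
        have := apEccLeDiam (G := G) w₁
        omega
      have hcv : c ≠ v := fun hh => hw1na (hh ▸ hc1).symm
      have hcw₁ : c ≠ w₁ := hc1.ne'
      have hcw₂ : c ≠ w₂ := by
        intro hh; subst hh; rw [SimpleGraph.dist_self] at hc2; omega
      have hcadj : G.Adj v c := by
        rcases hclass c with hh | hh | hh | hh
        · exact absurd hh hcv
        · exact absurd hh hcw₁
        · exact absurd hh hcw₂
        · exact hh
      rcases hS c hcadj with hh | hh
      · rw [apAdjDist hc1.symm] at hh; omega
      · omega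
  · -- diam ≥ 4
    have hvu : v = u := by
      by_contra hh
      have := hu_all v hh
      omega
    have heccv3 : graphEcc G v = 3 := by
      have : graphEcc G v = graphEcc G u := by rw [hvu]
      omega
    have hd4' : graphDiam G = 4 := by
      have : graphEcc G v = graphEcc G u := by rw [hvu]
      omega
    obtain ⟨s, hs⟩ := apEccExists (G := G) v
    rw [heccv3] at hs
    have hsv : s ≠ v := by
      intro hh; subst hh; rw [SimpleGraph.dist_self] at hs; omega
    have hsna : ¬ G.Adj v s := fun hh => by rw [apAdjDist hh] at hs; omega
    have claim4 : ∀ a b : V, ¬ G.Adj v a → ¬ G.Adj v b →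
        (∀ x : V, x = v ∨ x = a ∨ x = b ∨ G.Adj v x) → G.dist v a = 3 → False := by
      intro a b hna hnb hcl hda
      obtain ⟨c, hc1, hc2⟩ := apBack hc (show G.dist v a = 2 + 1 from hda)
      have hcv : c ≠ v := by
        intro hh; subst hh; rw [SimpleGraph.dist_self] at hc1; omega
      have hcna : ¬ G.Adj v c := fun hh => by rw [apAdjDist hh] at hc1; omega
      have hcb : c = b := by
        rcases hcl c with hh | hh | hh | hh
        · exact absurd hh hcv
        · subst hh; exact (G.irrefl hc2).elim
        · exact hh
        · exact absurd hh hcna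
      rw [hcb] at hc1 hc2
      have hba : G.Adj b a := hc2
      obtain ⟨t, ht1, ht2⟩ := apFront hc (show G.dist v b ≠ 0 by omega)
      have htb : G.Adj t b := SimpleGraph.dist_eq_one_iff_adj.mp (by omega)
      have htu : t ≠ u := fun hh => G.irrefl ((hvu.trans hh.symm).symm ▸ ht1)
      have hecct : graphEcc G t = 4 := by rw [hu_all t htu, hd4']
      obtain ⟨s', hs'⟩ := apEccExists (G := G) t
      rw [hecct] at hs'
      have h1 := hc.dist_triangle (u := t) (v := v) (w := s')
      rw [apAdjDist ht1.symm] at h1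
      have hvs'3 : 3 ≤ G.dist v s' := by omega
      have hvs'le : G.dist v s' ≤ 3 := heccv3 ▸ apDistLe v s'
      have hs'v : s' ≠ v := by
        intro hh; subst hh; rw [SimpleGraph.dist_self] at hvs'3; omega
      have hs'na : ¬ G.Adj v s' := fun hh => by rw [apAdjDist hh] at hvs'3; omega
      have hs'a : s' = a := by
        rcases hcl s' with hh | hh | hh | hh
        · exact absurd hh hs'v
        · exact hh
        · subst hh; omega
        · exact absurd hh hs'na
      rw [hs'a] at hs'
      have h2 := hc.dist_triangle (u := t) (v := b) (w := a)
      rw [apAdjDist htb, apAdjDist hba] at h2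
      omega
    rcases hclass s with hh | hh | hh | hh
    · exact absurd hh hsv
    · exact claim4 w₁ w₂ hw1na hw2na hclass (hh ▸ hs)
    · exact claim4 w₂ w₁ hw2na hw1na hclass' (hh ▸ hs)
    · exact absurd hh hsna

/-- Δ ≤ 2 is impossible. -/
lemma apNotSmall (hc : G.Connected) (h7 : 7 ≤ Fintype.card V)
    (hu_ne : graphEcc G u ≠ graphDiam G)
    (hu_all : ∀ v, v ≠ u → graphEcc G v = graphDiam G)
    (hΔ : graphMaxDeg G ≤ 2) : False := by
  classical
  have hne : Nonempty V := Fintype.card_pos_iff.mp (by omega)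
  have hd2 : 2 ≤ graphDiam G := apDiam2 hc (by omega) hu_ne
  have hue : graphEcc G u + 1 = graphDiam G := apEccU hc (by omega) hu_ne hu_all
  set e := graphEcc G u with he
  obtain ⟨x₁, hx₁⟩ := apNeighbor hc (by omega) u
  have hx₂ : ∃ x₂, G.Adj u x₂ ∧ x₂ ≠ x₁ := by
    by_contra hcon
    push_neg at hcon
    have hx1u : x₁ ≠ u := hx₁.ne'
    obtain ⟨y₀, hy₀⟩ := apEccExists (G := G) x₁
    rw [hu_all x₁ hx1u] at hy₀
    have hy₀u : y₀ ≠ u := by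
      intro hh; rw [hh] at hy₀
      have : G.dist x₁ u = 1 := apAdjDist hx₁.symm
      omega
    have h0 : G.dist u y₀ ≠ 0 := fun hh => hy₀u (hc.dist_eq_zero_iff.mp hh).symm
    obtain ⟨c, hcadj, hcd⟩ := apFront hc h0
    have hcx : c = x₁ := hcon c hcadj
    rw [hcx] at hcd
    have h1 : G.dist u y₀ ≤ e := apDistLe u y₀
    omega
  obtain ⟨x₂, hx₂, hx21⟩ := hx₂
  have hdeg3 : ∀ z a b c : V, G.Adj z a → G.Adj z b → G.Adj z c →
      a ≠ b → a ≠ c → b ≠ c → False := by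
    intro z a b c h1 h2 h3 hab hac hbc
    have hsub : ({a, b, c} : Finset V) ⊆ (G.neighborSet z).toFinset := by
      intro x hx
      simp only [Finset.mem_insert, Finset.mem_singleton] at hx
      rw [Set.mem_toFinset, SimpleGraph.mem_neighborSet]
      rcases hx with rfl | rfl | rfl <;> assumption
    have hcard : ({a, b, c} : Finset V).card = 3 := by
      rw [Finset.card_insert_of_notMem (by simp [hab, hac]),
        Finset.card_insert_of_notMem (by simp [hbc]), Finset.card_singleton]
    have h4 := Finset.card_le_card hsub
    rw [hcard, ← Set.ncard_eq_toFinset_card'] at h4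
    have h5 := apDegLe (G := G) z
    omega
  have hNu : ∀ z, G.Adj u z → z = x₁ ∨ z = x₂ := by
    intro z hz
    by_contra hcon
    push_neg at hcon
    exact hdeg3 u x₁ x₂ z hx₁ hx₂ hz (fun h => hx21 h.symm)
      (fun h => hcon.1 h.symm) (fun h => hcon.2 h.symm)
  -- spheres
  let S : V → ℕ → Finset V := fun p k => Finset.univ.filter (fun w => G.dist p w = k)
  have hmemS : ∀ p k (w : V), w ∈ S p k ↔ G.dist p w = k := by
    intro p k w; simp [S]
  have hsum : ∀ p : V,
      Fintype.card V = ∑ k ∈ Finset.range (graphEcc G p + 1), (S p k).card := by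
    intro p
    have huniv : Finset.univ = (Finset.range (graphEcc G p + 1)).biUnion (S p) := by
      apply Finset.ext
      intro w
      simp only [Finset.mem_univ, true_iff, Finset.mem_biUnion, Finset.mem_range]
      refine ⟨G.dist p w, ?_, ?_⟩
      · have := apDistLe (G := G) p w; omega
      · rw [hmemS]
    rw [← Finset.card_univ, huniv]
    exact Finset.card_biUnion (fun i _ j _ hij => by
      rw [Function.onFun, Finset.disjoint_left]
      intro w hwi hwj
      rw [hmemS] at hwi hwj
      omega)
  have hS0 : ∀ p : V, (S p 0).card = 1 := by
    intro p
    have hsp : S p 0 = {p} := by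
      apply Finset.ext
      intro w
      rw [hmemS, Finset.mem_singleton]
      constructor
      · intro h; exact (hc.dist_eq_zero_iff.mp h).symm
      · intro h; rw [h]; exact SimpleGraph.dist_self
    rw [hsp, Finset.card_singleton]
  have hSne : ∀ p k, k ≤ graphEcc G p → 1 ≤ (S p k).card := by
    intro p k hk
    obtain ⟨w, hw⟩ := apEccExists (G := G) p
    obtain ⟨c, hc1, -⟩ := apSplit hc (show k ≤ G.dist p w by omega)
    exact Finset.card_pos.mpr ⟨c, (hmemS p k c).mpr hc1⟩
  have hS1 : ∀ p, (S p 1).card ≤ 2 := by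
    intro p
    have hsub : S p 1 ⊆ (G.neighborSet p).toFinset := by
      intro w hw
      rw [hmemS] at hw
      rw [Set.mem_toFinset, SimpleGraph.mem_neighborSet]
      exact SimpleGraph.dist_eq_one_iff_adj.mp hw
    have h4 := Finset.card_le_card hsub
    rw [← Set.ncard_eq_toFinset_card'] at h4
    have h5 := apDegLe (G := G) p
    omega
  have hmono : ∀ p k, 1 ≤ k → (S p (k+1)).card ≤ (S p k).card := by
    intro p k hk
    have hback : ∀ w ∈ S p (k+1), ∃ c, G.dist p c = k ∧ G.Adj c w := by
      intro w hw
      rw [hmemS] at hw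
      exact apBack hc hw
    choose! f hf1 hf2 using hback
    apply Finset.card_le_card_of_injOn f
    · intro w hw
      rw [Finset.mem_coe, hmemS]
      exact hf1 w hw
    · intro a ha b hb hab
      by_contra hne'
      have ha' : a ∈ S p (k+1) := ha
      have hb' : b ∈ S p (k+1) := hb
      have hfa := hf1 a ha'
      obtain ⟨c', hc1', hc2'⟩ := apBack hc
        (show G.dist p (f a) = (k-1) + 1 by rw [hfa]; omega)
      have hda : G.dist p a = k + 1 := (hmemS _ _ _).mp ha'
      have hdb : G.dist p b = k + 1 := (hmemS _ _ _).mp hb'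
      have h1 : c' ≠ a := fun hh => by rw [hh] at hc1'; omega
      have h2 : c' ≠ b := fun hh => by rw [hh] at hc1'; omega
      have hfb2 : G.Adj (f a) b := by rw [hab]; exact hf2 b hb'
      exact hdeg3 (f a) a b c' (hf2 a ha') hfb2 hc2'.symm hne'
        (fun hh => h1 hh.symm) (fun hh => h2 hh.symm)
  have hanti : ∀ p k₁ k₂, 1 ≤ k₁ → k₁ ≤ k₂ → (S p k₂).card ≤ (S p k₁).card := by
    intro p k₁ k₂ h1 h2
    induction k₂, h2 using Nat.le_induction with
    | base => exact le_rfl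
    | succ m hm ih => exact (hmono p m (by omega)).trans ih
  have h2b : ∀ p k, 1 ≤ k → (S p k).card ≤ 2 := fun p k hk =>
    (hanti p 1 k le_rfl hk).trans (hS1 p)
  -- the far witnesses
  have hx1u : x₁ ≠ u := hx₁.ne'
  have hx2u : x₂ ≠ u := hx₂.ne'
  obtain ⟨y, hy⟩ := apEccExists (G := G) x₁
  rw [hu_all x₁ hx1u] at hy
  obtain ⟨y', hy'⟩ := apEccExists (G := G) x₂
  rw [hu_all x₂ hx2u] at hy'
  have hduy : G.dist u y = e := by
    have h1 := hc.dist_triangle (u := x₁) (v := u) (w := y)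
    rw [apAdjDist hx₁.symm] at h1
    have h2 := apDistLe (G := G) u y
    omega
  have hduy' : G.dist u y' = e := by
    have h1 := hc.dist_triangle (u := x₂) (v := u) (w := y')
    rw [apAdjDist hx₂.symm] at h1
    have h2 := apDistLe (G := G) u y'
    omega
  have he1 : 1 ≤ e := by omega
  have hdx2y : G.dist x₂ y = e - 1 := by
    obtain ⟨c, hcadj, hcd⟩ := apFront hc (show G.dist u y ≠ 0 by omega)
    rw [hduy] at hcd
    rcases hNu c hcadj with rfl | rfl
    · exfalso; omega
    · exact hcd
  have hdx1y' : G.dist x₁ y' = e - 1 := by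
    obtain ⟨c, hcadj, hcd⟩ := apFront hc (show G.dist u y' ≠ 0 by omega)
    rw [hduy'] at hcd
    rcases hNu c hcadj with rfl | rfl
    · exact hcd
    · exfalso; omega
  have hyy' : y ≠ y' := by
    intro hh; rw [hh] at hy
    omega
  have hSe2 : 2 ≤ (S u e).card :=
    Finset.one_lt_card.mpr ⟨y, (hmemS _ _ _).mpr hduy, y', (hmemS _ _ _).mpr hduy', hyy'⟩
  have hn2e : Fintype.card V = 2 * e + 1 := by
    have hs := hsum u
    rw [← he, Finset.sum_range_succ'] at hs
    have hconst : ∀ k ∈ Finset.range e, (S u (k+1)).card = 2 := by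
      intro k hk
      rw [Finset.mem_range] at hk
      have h1 := h2b u (k+1) (by omega)
      have h2 := hanti u (k+1) e (by omega) (by omega)
      omega
    rw [Finset.sum_congr rfl hconst, Finset.sum_const, Finset.card_range,
      smul_eq_mul, hS0] at hs
    omega
  have he3 : 3 ≤ e := by omega
  have hyu : y ≠ u := by
    intro hh; rw [hh, SimpleGraph.dist_self] at hduy; omega
  have heccy : graphEcc G y = e + 1 := by rw [hu_all y hyu]; omega
  have hSye : (S y e).card ≤ 1 := by
    by_contra hcon
    push_neg at hcon
    have hs := hsum y
    rw [heccy, Finset.sum_range_succ, Finset.sum_range_succ'] at hs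
    have hconst : ∀ k ∈ Finset.range e, 2 ≤ (S y (k+1)).card := by
      intro k hk
      rw [Finset.mem_range] at hk
      have := hanti y (k+1) e (by omega) (by omega)
      omega
    have hsumge : 2 * e ≤ ∑ k ∈ Finset.range e, (S y (k+1)).card := by
      calc 2 * e = ∑ _k ∈ Finset.range e, 2 := by
            rw [Finset.sum_const, Finset.card_range, smul_eq_mul]; ring
        _ ≤ _ := Finset.sum_le_sum hconst
    have hlast : 1 ≤ (S y (e+1)).card := hSne y (e+1) (by omega)
    rw [hS0] at hs
    omega
  have hSyeU : ∀ s, G.dist y s = e → s = u := by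
    intro s hs'
    have h1 : s ∈ S y e := (hmemS _ _ _).mpr hs'
    have h2 : u ∈ S y e := (hmemS _ _ _).mpr (by rw [SimpleGraph.dist_comm]; exact hduy)
    exact Finset.card_le_one.mp hSye s h1 u h2
  have hSyd : ∀ s, G.dist y s = e + 1 → s = x₁ := by
    intro s hs'
    obtain ⟨c, hc1, hc2⟩ := apBack hc hs'
    have hcu : c = u := hSyeU c hc1
    rw [hcu] at hc2
    rcases hNu s hc2 with rfl | rfl
    · rfl
    · exfalso
      rw [SimpleGraph.dist_comm] at hs'
      omega
  obtain ⟨q, hq1, hq2⟩ := apSplit hc (show e - 1 ≤ G.dist u y by omega)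
  rw [hduy] at hq2
  have hq2' : G.dist q y = 1 := by omega
  have hqu : q ≠ u := by
    intro hh; rw [hh, SimpleGraph.dist_self] at hq1; omega
  have heccq : graphEcc G q = e + 1 := by rw [hu_all q hqu]; omega
  obtain ⟨s, hs'⟩ := apEccExists (G := G) q
  rw [heccq] at hs'
  have h1 := hc.dist_triangle (u := q) (v := y) (w := s)
  rw [hq2'] at h1
  have h2 : G.dist y s ≤ e + 1 := by
    have := apDistLe (G := G) y s
    omega
  have h3 : e ≤ G.dist y s := by
    have := hc.dist_triangle (u := q) (v := y) (w := s)
    omega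
  rcases eq_or_lt_of_le h3 with hh | hh
  · have hsu : s = u := hSyeU s hh.symm
    rw [hsu, SimpleGraph.dist_comm] at hs'
    omega
  · have hse : G.dist y s = e + 1 := by omega
    have hsx : s = x₁ := hSyd s hse
    rw [hsx] at hs'
    have h4 := hc.dist_triangle (u := q) (v := u) (w := x₁)
    have h5 : G.dist q u = e - 1 := by rw [SimpleGraph.dist_comm]; exact hq1
    have h6 : G.dist u x₁ = 1 := apAdjDist hx₁
    omega

end MainCases

theorem maxDeg_of_almostPeripheral {V : Type*} [Fintype V]
    (G : SimpleGraph V) (n : ℕ) (hn : Fintype.card V = n) (h7 : 7 ≤ n)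
    (hAP : IsAlmostPeripheral G) :
    (graphMaxDeg G = n - 1 ∨ (3 ≤ graphMaxDeg G ∧ graphMaxDeg G ≤ n - 4)) ∧
      graphMaxDeg G ≠ n - 2 ∧ graphMaxDeg G ≠ n - 3 := by
  subst hn
  obtain ⟨hc, hcard⟩ := hAP
  have hne : Nonempty V := Fintype.card_pos_iff.mp (by omega)
  obtain ⟨u, hu_ne, hu_all⟩ := apUnique ⟨hc, hcard⟩ (by omega)
  have hA : graphMaxDeg G ≠ Fintype.card V - 2 := fun h => apNotN2 hc h7 hu_ne hu_all h
  have hB : graphMaxDeg G ≠ Fintype.card V - 3 := fun h => apNotN3 hc h7 hu_ne hu_all h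
  have hC : 3 ≤ graphMaxDeg G := by
    by_contra h
    exact apNotSmall hc h7 hu_ne hu_all (by omega)
  have hD : graphMaxDeg G ≤ Fintype.card V - 1 := apMaxDegLe
  exact ⟨by omega, hA, hB⟩
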